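/- A Wang tile set W admits a y-recurrent ℕ²-tiling if and only if it admits a periodic ℤ²-tiling. -/

import Mathlib

/-- A Wang tile over a set of colors `C`. -/
structure WangTile (C : Type*) where
  west : C
  south : C
  east : C
  north : C
deriving DecidableEq

variable {C : Type*}

/-- `f` is a valid tiling of the discrete plane `ℤ²` by the tile set `W`. -/
def IsZTiling (W : Finset (WangTile C)) (f : ℤ × ℤ → WangTile C) : Prop :=
  ∀ x y : ℤ, f (x, y) ∈ W ∧ (f (x, y)).east = (f (x + 1, y)).west ∧
    (f (x, y)).north = (f (x, y + 1)).south

/-- `g` is a valid tiling of the first quadrant `ℕ²` by the tile set `W`. -/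
def IsNTiling (W : Finset (WangTile C)) (g : ℕ × ℕ → WangTile C) : Prop :=
  ∀ x y : ℕ, g (x, y) ∈ W ∧ (g (x, y)).east = (g (x + 1, y)).west ∧
    (g (x, y)).north = (g (x, y + 1)).south

/-- A `ℤ²`-tiling is periodic if it has a nonzero periodicity vector. -/
def PeriodicTiling (f : ℤ × ℤ → WangTile C) : Prop :=
  ∃ v : ℤ × ℤ, v ≠ 0 ∧ ∀ t : ℤ × ℤ, f (t + v) = f t

/-- An `ℕ²`-tiling is y-recurrent if two distinct rows have the same horizontal word
(sequence of south colors). -/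
def YRecurrent (g : ℕ × ℕ → WangTile C) : Prop :=
  ∃ i j : ℕ, i ≠ j ∧ ∀ x : ℕ, (g (x, i)).south = (g (x, j)).south

namespace Stmt9Aux

lemma exists_lt_eq {β : Type*} [Finite β] (φ : ℕ → β) : ∃ m n : ℕ, m < n ∧ φ m = φ n := by
  obtain ⟨m, n, hne, h⟩ := Finite.exists_ne_map_eq_of_infinite φ
  rcases hne.lt_or_gt with h' | h'
  · exact ⟨m, n, h', h⟩
  · exact ⟨n, m, h', h.symm⟩

/-- representative of `u` modulo `p` in the window `[x1, x1+p)` -/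
def rep (x1 p u : ℤ) : ℤ := x1 + (u - x1) % p

lemma rep_lb (x1 p u : ℤ) (hp : 0 < p) : x1 ≤ rep x1 p u := by
  have := Int.emod_nonneg (u - x1) (by omega : p ≠ 0)
  unfold rep; omega

lemma rep_ub (x1 p u : ℤ) (hp : 0 < p) : rep x1 p u < x1 + p := by
  have := Int.emod_lt_of_pos (u - x1) hp
  unfold rep; omega

lemma rep_eq_self {x1 p u : ℤ} (h1 : x1 ≤ u) (h2 : u < x1 + p) : rep x1 p u = u := by
  unfold rep
  rw [Int.emod_eq_of_lt (by omega) (by omega)]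
  omega

lemma rep_congr {x1 p u v : ℤ} (h : p ∣ u - v) : rep x1 p u = rep x1 p v := by
  obtain ⟨c, hc⟩ := h
  have hu : u - x1 = (v - x1) + p * c := by omega
  unfold rep
  rw [hu, Int.add_mul_emod_self_left]

lemma dvd_sub_rep (x1 p u : ℤ) : p ∣ u - rep x1 p u := by
  unfold rep
  have h := Int.mul_ediv_add_emod (u - x1) p
  exact ⟨(u - x1) / p, by omega⟩

lemma rep_succ (x1 p u : ℤ) (hp : 0 < p) :
    rep x1 p (u + 1) = rep x1 p u + 1 ∨
      (rep x1 p u = x1 + p - 1 ∧ rep x1 p (u + 1) = x1) := by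
  have h0 : 0 ≤ (u - x1) % p := Int.emod_nonneg _ (by omega)
  have h1 : (u - x1) % p < p := Int.emod_lt_of_pos _ hp
  have key : (u + 1 - x1) % p = ((u - x1) % p + 1) % p := by
    have hd := Int.mul_ediv_add_emod (u - x1) p
    have : u + 1 - x1 = ((u - x1) % p + 1) + p * ((u - x1) / p) := by omega
    rw [this, Int.add_mul_emod_self_left]
  rcases lt_or_eq_of_le (by omega : (u - x1) % p + 1 ≤ p) with h | h
  · left
    unfold rep
    rw [key, Int.emod_eq_of_lt (by omega) h]
    omega
  · right
    unfold rep
    rw [key, h, Int.emod_self]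
    omega

lemma ediv_emod_succ (b y : ℤ) (hb : 0 < b) :
    ((y + 1) % b = y % b + 1 ∧ (y + 1) / b = y / b) ∨
      (y % b = b - 1 ∧ (y + 1) % b = 0 ∧ (y + 1) / b = y / b + 1) := by
  have e1 := Int.mul_ediv_add_emod y b
  have e2 := Int.mul_ediv_add_emod (y + 1) b
  have h0 : 0 ≤ y % b := Int.emod_nonneg y (by omega)
  have h1 : y % b < b := Int.emod_lt_of_pos y hb
  have h0' : 0 ≤ (y + 1) % b := Int.emod_nonneg _ (by omega)
  have h1' : (y + 1) % b < b := Int.emod_lt_of_pos _ hb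
  have key : b * ((y + 1) / b - y / b) = y % b + 1 - (y + 1) % b := by
    have : b * ((y+1)/b) - b * (y/b) = b * ((y+1)/b - y/b) := by ring
    omega
  have hd : (y + 1) / b - y / b = 0 ∨ (y + 1) / b - y / b = 1 := by
    set d := (y + 1) / b - y / b with hdd
    rcases lt_trichotomy d 0 with h | h | h
    · exfalso; nlinarith
    · left; exact h
    · rcases lt_or_eq_of_le (by omega : 1 ≤ d) with h2 | h2
      · exfalso; nlinarith
      · right; omega
  rcases hd with h | h
  · left
    rw [h] at key; constructor <;> omega
  · right
    rw [h] at key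
    refine ⟨by omega, by omega, by omega⟩

lemma ediv_emod_add_mul (b y p : ℤ) (hb : b ≠ 0) :
    (y + b * p) % b = y % b ∧ (y + b * p) / b = y / b + p :=
  ⟨Int.add_mul_emod_self_left .., Int.add_mul_ediv_left y p hb⟩


lemma forward {W : Finset (WangTile C)} {g : ℕ × ℕ → WangTile C}
    (hg : IsNTiling W g) (hrec : YRecurrent g) :
    ∃ f : ℤ × ℤ → WangTile C, IsZTiling W f ∧ PeriodicTiling f := by
  obtain ⟨i0, j0, hij, hr0⟩ := hrec
  obtain ⟨i, h, hh, hr⟩ : ∃ i h : ℕ, 0 < h ∧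
      ∀ x : ℕ, (g (x, i)).south = (g (x, i + h)).south := by
    rcases lt_or_gt_of_ne hij with hlt | hlt
    · refine ⟨i0, j0 - i0, by omega, fun x => ?_⟩
      have := hr0 x
      rwa [show i0 + (j0 - i0) = j0 by omega]
    · refine ⟨j0, i0 - j0, by omega, fun x => ?_⟩
      have := (hr0 x).symm
      rwa [show j0 + (i0 - j0) = i0 by omega]
  obtain ⟨x1, x2, hx12, heq⟩ :=
    exists_lt_eq (fun x : ℕ => fun r : Fin h => (⟨g (x, i + r), (hg x (i + r)).1⟩ : {t // t ∈ W}))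
  set p : ℕ := x2 - x1 with hpdef
  have hp : 0 < p := by omega
  have col_eq : ∀ r : ℕ, r < h → g (x2, i + r) = g (x1, i + r) := by
    intro r hrlt
    have := congrFun heq ⟨r, hrlt⟩
    exact (Subtype.ext_iff.mp this).symm
  set X : ℤ → ℤ := rep (x1 : ℤ) (p : ℤ) with hXdef
  set Y : ℤ → ℤ := rep (i : ℤ) (h : ℤ) with hYdef
  have hp' : (0 : ℤ) < (p : ℤ) := by exact_mod_cast hp
  have hh' : (0 : ℤ) < (h : ℤ) := by exact_mod_cast hh
  have hXlb : ∀ x, (x1 : ℤ) ≤ X x := fun x => rep_lb _ _ x hp'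
  have hXub : ∀ x, X x < (x1 : ℤ) + p := fun x => rep_ub _ _ x hp'
  have hYlb : ∀ y, (i : ℤ) ≤ Y y := fun y => rep_lb _ _ y hh'
  have hYub : ∀ y, Y y < (i : ℤ) + h := fun y => rep_ub _ _ y hh'
  refine ⟨fun t => g ((X t.1).toNat, (Y t.2).toNat), ?_, ?_⟩
  · intro x y
    refine ⟨(hg _ _).1, ?_, ?_⟩
    · -- east
      show (g ((X x).toNat, (Y y).toNat)).east = (g ((X (x+1)).toNat, (Y y).toNat)).west
      rcases rep_succ (x1 : ℤ) (p : ℤ) x hp' with hs | ⟨h1, h2⟩ <;>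
        first
        | (rw [← hXdef] at hs)
        | (rw [← hXdef] at h1 h2)
      · have hx' : (X (x+1)).toNat = (X x).toNat + 1 := by
          have := hXlb x; omega
        rw [hx']
        exact (hg _ _).2.1
      · have hXn : (X x).toNat = x1 + p - 1 := by
          have := hXlb x; omega
        have hXn' : (X (x+1)).toNat = x1 := by omega
        rw [hXn, hXn']
        have e1 := (hg (x1 + p - 1) ((Y y).toNat)).2.1
        rw [show x1 + p - 1 + 1 = x2 by omega] at e1
        have hY1 : i ≤ (Y y).toNat ∧ (Y y).toNat < i + h := by
          have := hYlb y; have := hYub y; omega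
        have hYr : (Y y).toNat = i + ((Y y).toNat - i) := by omega
        rw [e1, hYr, col_eq _ (by omega)]
    · -- north
      show (g ((X x).toNat, (Y y).toNat)).north = (g ((X x).toNat, (Y (y+1)).toNat)).south
      rcases rep_succ (i : ℤ) (h : ℤ) y hh' with hs | ⟨h1, h2⟩ <;>
        first
        | (rw [← hYdef] at hs)
        | (rw [← hYdef] at h1 h2)
      · have hy' : (Y (y+1)).toNat = (Y y).toNat + 1 := by
          have := hYlb y; omega
        rw [hy']
        exact (hg _ _).2.2
      · have hYn : (Y y).toNat = i + h - 1 := by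
          have := hYlb y; omega
        have hYn' : (Y (y+1)).toNat = i := by omega
        rw [hYn, hYn']
        have e1 := (hg ((X x).toNat) (i + h - 1)).2.2
        rw [show i + h - 1 + 1 = i + h by omega] at e1
        rw [e1]
        exact (hr _).symm
  · refine ⟨((0 : ℤ), (h : ℤ)), by simp [Prod.ext_iff]; omega, ?_⟩
    intro t
    show g ((X (t.1 + 0)).toNat, (Y (t.2 + h)).toNat) = g ((X t.1).toNat, (Y t.2).toNat)
    have e1 : X (t.1 + 0) = X t.1 := by rw [add_zero]
    have e2 : Y (t.2 + h) = Y t.2 := rep_congr ⟨1, by ring⟩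
    rw [e1, e2]

lemma backward_b0 {W : Finset (WangTile C)} {f : ℤ × ℤ → WangTile C}
    (hf : IsZTiling W f) (a : ℤ) (ha : 0 < a)
    (hper : ∀ x y : ℤ, f (x + a, y) = f (x, y)) :
    ∃ g : ℕ × ℕ → WangTile C, IsNTiling W g ∧ YRecurrent g := by
  have hper' : ∀ x y : ℤ, f (x - a, y) = f (x, y) := by
    intro x y
    have := hper (x - a) y
    rw [show x - a + a = x by ring] at this
    exact this.symm
  have perk : ∀ (k : ℤ) (x y : ℤ), f (x + a * k, y) = f (x, y) := by
    intro k
    induction k using Int.induction_on with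
    | zero => intro x y; simp
    | succ n ih =>
        intro x y
        rw [show x + a * ((n : ℤ) + 1) = (x + a * n) + a by ring, hper, ih]
    | pred n ih =>
        intro x y
        rw [show x + a * (-(n : ℤ) - 1) = (x + a * (-(n:ℤ))) - a by ring, hper', ih]
  have row_det : ∀ x y : ℤ, f (x, y) = f (x % a, y) := by
    intro x y
    have hd := Int.mul_ediv_add_emod x a
    rw [show x = x % a + a * (x / a) by omega, perk]
    rw [show x % a + a * (x / a) = x by omega]
  obtain ⟨y1, y2, hy, heq⟩ :=
    exists_lt_eq (fun y : ℕ => fun k : Fin a.toNat =>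
      (⟨f (((k : ℕ) : ℤ), (y : ℤ)), (hf _ _).1⟩ : {t // t ∈ W}))
  have row_eq : ∀ x : ℤ, f (x, (y1 : ℤ)) = f (x, (y2 : ℤ)) := by
    intro x
    have h0 : 0 ≤ x % a := Int.emod_nonneg x (by omega)
    have h1 : x % a < a := Int.emod_lt_of_pos x ha
    have hk2 : (x % a).toNat < a.toNat := by omega
    have e := Subtype.ext_iff.mp (congrFun heq ⟨(x % a).toNat, hk2⟩)
    have hk : (((x % a).toNat : ℕ) : ℤ) = x % a := by omega
    rw [hk] at e
    rw [row_det x (y1 : ℤ), row_det x (y2 : ℤ)]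
    exact e
  refine ⟨fun t => f ((t.1 : ℤ), (t.2 : ℤ)), ?_, y1, y2, by omega, ?_⟩
  · intro x y
    refine ⟨(hf _ _).1, ?_, ?_⟩
    · show (f ((x:ℤ), (y:ℤ))).east = (f (((x+1 : ℕ) : ℤ), (y:ℤ))).west
      push_cast
      exact (hf _ _).2.1
    · show (f ((x:ℤ), (y:ℤ))).north = (f ((x:ℤ), ((y+1 : ℕ) : ℤ))).south
      push_cast
      exact (hf _ _).2.2
  · intro x
    exact congrArg WangTile.south (row_eq (x : ℤ))

lemma backward_bpos {W : Finset (WangTile C)} {f : ℤ × ℤ → WangTile C}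
    (hf : IsZTiling W f) (a b : ℤ) (hb : 0 < b)
    (hper : ∀ x y : ℤ, f (x + a, y + b) = f (x, y)) :
    ∃ g : ℕ × ℕ → WangTile C, IsNTiling W g ∧ YRecurrent g := by
  obtain ⟨A, A', hA0, hA'0, hAabs, hAa⟩ :
      ∃ A A' : ℤ, 0 ≤ A ∧ 0 ≤ A' ∧ A + A' = (a.natAbs : ℤ) ∧ A - A' = a := by
    rcases le_or_gt 0 a with h | h
    · exact ⟨a, 0, h, le_refl 0, by omega, by ring⟩
    · exact ⟨0, -a, le_refl 0, by omega, by omega, by ring⟩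
  set m : ℕ := a.natAbs + 1 with hmdef
  have hm : (m : ℤ) = A + A' + 1 := by omega
  obtain ⟨n1, n2, hn, heq⟩ :=
    exists_lt_eq (fun n : ℕ => fun k : Fin m => fun r : Fin b.toNat =>
      (⟨f (((n * m : ℕ) : ℤ) - A + ((k : ℕ) : ℤ), ((r : ℕ) : ℤ)), (hf _ _).1⟩ : {t // t ∈ W}))
  set x1 : ℤ := ((n1 * m : ℕ) : ℤ) with hx1def
  set x2 : ℤ := ((n2 * m : ℕ) : ℤ) with hx2def
  set p : ℤ := x2 - x1 with hpdef
  have hpm : (m : ℤ) ≤ p := by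
    have h1 : (n1 + 1) * m ≤ n2 * m := Nat.mul_le_mul_right m (by omega)
    have h2 : ((n1 * m : ℕ) : ℤ) + (m : ℤ) ≤ ((n2 * m : ℕ) : ℤ) := by push_cast at h1 ⊢; nlinarith
    omega
  have hp : 0 < p := by omega
  have E : ∀ z r : ℤ, x1 - A ≤ z → z ≤ x1 + A' → 0 ≤ r → r < b → f (z, r) = f (z + p, r) := by
    intro z r hz1 hz2 hr1 hr2
    have hkm : (z - (x1 - A)).toNat < m := by omega
    have hrb : r.toNat < b.toNat := by omega
    have e := Subtype.ext_iff.mp (congrFun (congrFun heq ⟨(z - (x1 - A)).toNat, hkm⟩) ⟨r.toNat, hrb⟩)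
    have c1 : (((z - (x1 - A)).toNat : ℕ) : ℤ) = z - x1 + A := by omega
    have c2 : ((r.toNat : ℕ) : ℤ) = r := by omega
    rw [c1, c2] at e
    rw [show x1 - A + (z - x1 + A) = z from by ring] at e
    rw [show x2 - A + (z - x1 + A) = z + p from by ring] at e
    exact e
  have Rdvd : ∀ u, p ∣ u - rep x1 p u := dvd_sub_rep x1 p
  have hf' : IsZTiling W (fun t : ℤ × ℤ => f (rep x1 p (t.1 - a * (t.2 / b)), t.2 % b)) := by
    intro x y
    refine ⟨(hf _ _).1, ?_, ?_⟩
    · show (f (rep x1 p (x - a * (y / b)), y % b)).east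
        = (f (rep x1 p (x + 1 - a * (y / b)), y % b)).west
      rw [show x + 1 - a * (y / b) = (x - a * (y / b)) + 1 from by ring]
      rcases rep_succ x1 p (x - a * (y / b)) hp with hs | ⟨h1, h2⟩
      · rw [hs]
        exact (hf _ _).2.1
      · rw [h1, h2]
        have e1 := (hf (x1 + p - 1) (y % b)).2.1
        rw [show x1 + p - 1 + 1 = x1 + p from by ring] at e1
        have e2 := E x1 (y % b) (by omega) (by omega)
          (Int.emod_nonneg y (by omega)) (Int.emod_lt_of_pos y hb)
        rw [e1, ← e2]
    · show (f (rep x1 p (x - a * (y / b)), y % b)).north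
        = (f (rep x1 p (x - a * ((y + 1) / b)), (y + 1) % b)).south
      rcases ediv_emod_succ b y hb with ⟨hr1, hq1⟩ | ⟨hr1, hr2, hq1⟩
      · rw [hq1, hr1]
        exact (hf _ _).2.2
      · rw [hq1, hr2, hr1]
        set z : ℤ := rep x1 p (x - a * (y / b)) with hzdef
        have hz1 : x1 ≤ z := rep_lb _ _ _ hp
        have hz2 : z < x1 + p := rep_ub _ _ _ hp
        have step1 : (f (z, b - 1)).north = (f (z, b)).south := by
          have e := (hf z (b - 1)).2.2
          rwa [show b - 1 + 1 = b from by ring] at e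
        have step2 : f (z, b) = f (z - a, 0) := by
          have e := hper (z - a) 0
          rwa [show z - a + a = z from by ring, zero_add] at e
        have step3 : f (z - a, 0) = f (rep x1 p (z - a), 0) := by
          rcases le_or_gt x1 (z - a) with hc | hc
          · rcases lt_or_ge (z - a) (x1 + p) with hc2 | hc2
            · rw [rep_eq_self hc hc2]
            · have hrw : rep x1 p (z - a) = z - a - p := by
                rw [rep_congr (show p ∣ (z - a) - (z - a - p) from ⟨1, by ring⟩)]
                exact rep_eq_self (by omega) (by omega)
              have e := E (z - a - p) 0 (by omega) (by omega) le_rfl hb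
              rw [show z - a - p + p = z - a from by ring] at e
              rw [hrw]
              exact e.symm
          · have hrw : rep x1 p (z - a) = z - a + p := by
              rw [rep_congr (show p ∣ (z - a) - (z - a + p) from ⟨-1, by ring⟩)]
              exact rep_eq_self (by omega) (by omega)
            have e := E (z - a) 0 (by omega) (by omega) le_rfl hb
            rw [hrw]
            exact e
        have hRu : rep x1 p (x - a * (y / b + 1)) = rep x1 p (z - a) := by
          apply rep_congr
          rw [show x - a * (y / b + 1) - (z - a) = (x - a * (y / b)) - z from by ring]
          exact Rdvd _
        rw [hRu, ← step3, ← step2]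
        exact step1
  have periodY : ∀ x y : ℤ,
      f (rep x1 p (x - a * ((y + b * p) / b)), (y + b * p) % b)
        = f (rep x1 p (x - a * (y / b)), y % b) := by
    intro x y
    obtain ⟨em, ed⟩ := ediv_emod_add_mul b y p (by omega)
    rw [em, ed]
    have e : rep x1 p (x - a * (y / b + p)) = rep x1 p (x - a * (y / b)) :=
      rep_congr ⟨-a, by ring⟩
    rw [e]
  have hbp : 0 < b * p := mul_pos hb hp
  refine ⟨fun t => f (rep x1 p ((t.1 : ℤ) - a * ((t.2 : ℤ) / b)), (t.2 : ℤ) % b),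
    ?_, 0, (b * p).toNat, by omega, ?_⟩
  · intro x y
    refine ⟨(hf' ((x:ℤ)) ((y:ℤ))).1, ?_, ?_⟩
    · show (f (rep x1 p ((x:ℤ) - a * ((y:ℤ) / b)), (y:ℤ) % b)).east
        = (f (rep x1 p (((x+1 : ℕ):ℤ) - a * ((y:ℤ) / b)), (y:ℤ) % b)).west
      have e := (hf' ((x:ℤ)) ((y:ℤ))).2.1
      simp only [] at e
      rw [show (((x+1 : ℕ)):ℤ) = (x:ℤ) + 1 from by push_cast; ring]
      exact e
    · show (f (rep x1 p ((x:ℤ) - a * ((y:ℤ) / b)), (y:ℤ) % b)).north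
        = (f (rep x1 p ((x:ℤ) - a * (((y+1 : ℕ):ℤ) / b)), ((y+1 : ℕ):ℤ) % b)).south
      have e := (hf' ((x:ℤ)) ((y:ℤ))).2.2
      simp only [] at e
      rw [show (((y+1 : ℕ)):ℤ) = (y:ℤ) + 1 from by push_cast; ring]
      exact e
  · intro x
    show (f (rep x1 p ((x:ℤ) - a * (((0:ℕ):ℤ) / b)), ((0:ℕ):ℤ) % b)).south
      = (f (rep x1 p ((x:ℤ) - a * ((((b*p).toNat : ℕ):ℤ) / b)), (((b*p).toNat : ℕ):ℤ) % b)).south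
    rw [show ((((b*p).toNat : ℕ)):ℤ) = 0 + b * p from by omega]
    rw [periodY (x:ℤ) 0]
    norm_num

end Stmt9Aux

/-- A Wang tile set admits a y-recurrent `ℕ²`-tiling iff it admits a periodic `ℤ²`-tiling. -/
theorem stmt9 (W : Finset (WangTile C)) :
    (∃ g : ℕ × ℕ → WangTile C, IsNTiling W g ∧ YRecurrent g) ↔
      (∃ f : ℤ × ℤ → WangTile C, IsZTiling W f ∧ PeriodicTiling f) := by
  constructor
  · rintro ⟨g, hg, hrec⟩
    exact Stmt9Aux.forward hg hrec
  · rintro ⟨f, hf, ⟨a, b⟩, hv, hper⟩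
    have per2 : ∀ x y : ℤ, f (x + a, y + b) = f (x, y) := fun x y => hper (x, y)
    have perneg : ∀ x y : ℤ, f (x + -a, y + -b) = f (x, y) := by
      intro x y
      have := per2 (x + -a) (y + -b)
      rw [show x + -a + a = x from by ring, show y + -b + b = y from by ring] at this
      exact this.symm
    rcases lt_trichotomy b 0 with hbs | hbs | hbs
    · exact Stmt9Aux.backward_bpos hf (-a) (-b) (by omega) perneg
    · subst hbs
      have ha : a ≠ 0 := by
        intro h
        apply hv
        simp [Prod.ext_iff, h]
      rcases lt_or_gt_of_ne ha with has | has
      · refine Stmt9Aux.backward_b0 hf (-a) (by omega) (fun x y => ?_)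
        have := perneg x y
        simpa using this
      · refine Stmt9Aux.backward_b0 hf a has (fun x y => ?_)
        have := per2 x y
        simpa using this
    · exact Stmt9Aux.backward_bpos hf a b hbs per2
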